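/- Every formula φ of EMDL is 2^{vrank(φ)}-coherent: for every Kripke model K and every team T of K, K,T ⊨ φ if and only if K,T' ⊨ φ for all subteams T' ⊆ T with |T'| ≤ 2^{vrank(φ)}. Here vrank(φ) is the number of occurrences of ⊻ in the ML(⊻)-formula obtained from φ by replacing each dependence atom =(φ₁,…,φₙ,ψ) by ⋁_{a₁,…,aₙ ∈ {⊥,⊤}} (φ₁^{a₁} ∧ … ∧ φₙ^{aₙ} ∧ (ψ ⊻ ψ^⊥)). -/

import Mathlib

/-- A Kripke model over a (nonempty) type `W` of worlds: an accessibility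
relation `R` and a valuation `V`. -/
structure Kripke (W : Type) where
  R : W → W → Prop
  V : ℕ → Set W

/-- The image team `R[T] = {w | ∃ v ∈ T, v R w}`. -/
def Kripke.img {W : Type} (K : Kripke W) (T : Set W) : Set W :=
  {w | ∃ v ∈ T, K.R v w}

/-- `T[R]S`: every world of `T` has an `R`-successor in `S` and every world of
`S` has an `R`-predecessor in `T`. -/
def Kripke.step {W : Type} (K : Kripke W) (T S : Set W) : Prop :=
  (∀ w ∈ T, ∃ v ∈ S, K.R w v) ∧ (∀ v ∈ S, ∃ w ∈ T, K.R w v)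

/-- Formulas of modal logic `ML` in negation normal form. -/
inductive MLForm : Type
  | pos : ℕ → MLForm
  | neg : ℕ → MLForm
  | and : MLForm → MLForm → MLForm
  | or  : MLForm → MLForm → MLForm
  | dia : MLForm → MLForm
  | box : MLForm → MLForm

/-- Team semantics for `ML`. A team is a set of worlds. -/
def MLSat {W : Type} (K : Kripke W) : Set W → MLForm → Prop
  | T, .pos p => T ⊆ K.V p
  | T, .neg p => T ∩ K.V p = ∅
  | T, .and φ ψ => MLSat K T φ ∧ MLSat K T ψ
  | T, .or φ ψ => ∃ T₁ T₂, T₁ ∪ T₂ = T ∧ MLSat K T₁ φ ∧ MLSat K T₂ ψ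
  | T, .dia φ => ∃ T', K.step T T' ∧ MLSat K T' φ
  | T, .box φ => MLSat K (K.img T) φ

/-- Formulas of `ML(⊻)`: modal logic in negation normal form extended with
intuitionistic disjunction `⊻` (`idis`). -/
inductive MLIForm : Type
  | pos : ℕ → MLIForm
  | neg : ℕ → MLIForm
  | and : MLIForm → MLIForm → MLIForm
  | or  : MLIForm → MLIForm → MLIForm
  | dia : MLIForm → MLIForm
  | box : MLIForm → MLIForm
  | idis : MLIForm → MLIForm → MLIForm

/-- Team semantics for `ML(⊻)`. -/
def MLISat {W : Type} (K : Kripke W) : Set W → MLIForm → Prop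
  | T, .pos p => T ⊆ K.V p
  | T, .neg p => T ∩ K.V p = ∅
  | T, .and φ ψ => MLISat K T φ ∧ MLISat K T ψ
  | T, .or φ ψ => ∃ T₁ T₂, T₁ ∪ T₂ = T ∧ MLISat K T₁ φ ∧ MLISat K T₂ ψ
  | T, .dia φ => ∃ T', K.step T T' ∧ MLISat K T' φ
  | T, .box φ => MLISat K (K.img T) φ
  | T, .idis φ ψ => MLISat K T φ ∨ MLISat K T ψ

/-- `vrank φ`: the number of occurrences of `⊻` in an `ML(⊻)`-formula. -/
def vrank : MLIForm → ℕ
  | .pos _ => 0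
  | .neg _ => 0
  | .and φ ψ => vrank φ + vrank ψ
  | .or φ ψ => vrank φ + vrank ψ
  | .dia φ => vrank φ
  | .box φ => vrank φ
  | .idis φ ψ => vrank φ + vrank ψ + 1

/-- All tuples (lists) of `n` signs (Booleans), i.e. `{⊥,⊤}ⁿ`. -/
def allBLists : ℕ → List (List Bool)
  | 0 => [[]]
  | n + 1 => (allBLists n).flatMap fun l => [true :: l, false :: l]

/-- `φ^⊥`: the negation normal form of `¬φ`, for an `ML`-formula `φ` in
negation normal form. -/
def MLForm.nnfNeg : MLForm → MLForm
  | .pos p => .neg p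
  | .neg p => .pos p
  | .and φ ψ => .or φ.nnfNeg ψ.nnfNeg
  | .or φ ψ => .and φ.nnfNeg ψ.nnfNeg
  | .dia φ => .box φ.nnfNeg
  | .box φ => .dia φ.nnfNeg

/-- The embedding of `ML` into `ML(⊻)`. -/
def MLForm.toMLI : MLForm → MLIForm
  | .pos p => .pos p
  | .neg p => .neg p
  | .and φ ψ => .and φ.toMLI ψ.toMLI
  | .or φ ψ => .or φ.toMLI ψ.toMLI
  | .dia φ => .dia φ.toMLI
  | .box φ => .box φ.toMLI

/-- `φ^a`: the formula `φ` if `a = ⊤` and `φ^⊥` if `a = ⊥`. -/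
def mlLit (φ : MLForm) (a : Bool) : MLIForm :=
  if a then φ.toMLI else φ.nnfNeg.toMLI

/-- The conjunction `φ₁^{a₁} ∧ … ∧ φₙ^{aₙ} ∧ (ψ ⊻ ψ^⊥)`. -/
def mlDepConj (φs : List MLForm) (a : List Bool) (ψ : MLForm) : MLIForm :=
  (List.zipWith mlLit φs a).foldr MLIForm.and
    (MLIForm.idis ψ.toMLI ψ.nnfNeg.toMLI)

/-- Big splitting disjunction `⋁` of a (nonempty) list of formulas. -/
def mlBigOr : List MLIForm → MLIForm
  | [] => .pos 0
  | [φ] => φ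
  | φ :: ψ :: l => .or φ (mlBigOr (ψ :: l))

/-- The `ML(⊻)`-formula
`⋁_{a₁,…,aₙ ∈ {⊥,⊤}} (φ₁^{a₁} ∧ … ∧ φₙ^{aₙ} ∧ (ψ ⊻ ψ^⊥))`. -/
def mlDepTranslation (φs : List MLForm) (ψ : MLForm) : MLIForm :=
  mlBigOr ((allBLists φs.length).map fun a => mlDepConj φs a ψ)

/-- Formulas of extended modal dependence logic `EMDL`: modal logic in
negation normal form extended with dependence atoms `=(φ₁,…,φₙ,ψ)` over
`ML`-formulas. -/
inductive EMDLForm : Type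
  | pos : ℕ → EMDLForm
  | neg : ℕ → EMDLForm
  | and : EMDLForm → EMDLForm → EMDLForm
  | or  : EMDLForm → EMDLForm → EMDLForm
  | dia : EMDLForm → EMDLForm
  | box : EMDLForm → EMDLForm
  | dep : List MLForm → MLForm → EMDLForm

/-- Team semantics for `EMDL`. -/
def EMDLSat {W : Type} (K : Kripke W) : Set W → EMDLForm → Prop
  | T, .pos p => T ⊆ K.V p
  | T, .neg p => T ∩ K.V p = ∅
  | T, .and φ ψ => EMDLSat K T φ ∧ EMDLSat K T ψ
  | T, .or φ ψ => ∃ T₁ T₂, T₁ ∪ T₂ = T ∧ EMDLSat K T₁ φ ∧ EMDLSat K T₂ ψ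
  | T, .dia φ => ∃ T', K.step T T' ∧ EMDLSat K T' φ
  | T, .box φ => EMDLSat K (K.img T) φ
  | T, .dep φs ψ => ∀ w ∈ T, ∀ v ∈ T,
      (∀ χ ∈ φs, (MLSat K {w} χ ↔ MLSat K {v} χ)) →
      (MLSat K {w} ψ ↔ MLSat K {v} ψ)

/-- The compositional translation of `EMDL` into `ML(⊻)`, replacing each
dependence atom `=(φ₁,…,φₙ,ψ)` by
`⋁_{a⃗ ∈ {⊥,⊤}ⁿ} (φ₁^{a₁} ∧ … ∧ φₙ^{aₙ} ∧ (ψ ⊻ ψ^⊥))`. -/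
def EMDLForm.toMLI : EMDLForm → MLIForm
  | .pos p => .pos p
  | .neg p => .neg p
  | .and φ ψ => .and φ.toMLI ψ.toMLI
  | .or φ ψ => .or φ.toMLI ψ.toMLI
  | .dia φ => .dia φ.toMLI
  | .box φ => .box φ.toMLI
  | .dep φs ψ => mlDepTranslation φs ψ

/-- `vrank` of an `EMDL`-formula: the number of `⊻`'s in its `ML(⊻)`
translation. -/
def vrankE (φ : EMDLForm) : ℕ := vrank φ.toMLI


/-! ### Auxiliary lemmas -/

section Aux

variable {W : Type} (K : Kripke W)

lemma ml_empty (χ : MLForm) : MLSat K ∅ χ := by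
  induction χ with
  | pos p => simp [MLSat]
  | neg p => simp [MLSat]
  | and φ ψ ihφ ihψ => exact ⟨ihφ, ihψ⟩
  | or φ ψ ihφ ihψ => exact ⟨∅, ∅, by simp, ihφ, ihψ⟩
  | dia φ ih => exact ⟨∅, ⟨by simp, by simp⟩, ih⟩
  | box φ ih =>
    have h : K.img ∅ = ∅ := by
      ext v; simp [Kripke.img]
    show MLSat K (K.img ∅) φ
    rw [h]; exact ih

lemma ml_flat (χ : MLForm) : ∀ T : Set W, MLSat K T χ ↔ ∀ w ∈ T, MLSat K {w} χ := by
  induction χ with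
  | pos p =>
    intro T
    show T ⊆ K.V p ↔ ∀ w ∈ T, ({w} : Set W) ⊆ K.V p
    simp [Set.subset_def]
  | neg p =>
    intro T
    show T ∩ K.V p = ∅ ↔ ∀ w ∈ T, ({w} : Set W) ∩ K.V p = ∅
    simp [Set.eq_empty_iff_forall_notMem]
  | and φ ψ ihφ ihψ =>
    intro T
    constructor
    · rintro ⟨h1, h2⟩ w hw; exact ⟨(ihφ T).1 h1 w hw, (ihψ T).1 h2 w hw⟩
    · intro h
      exact ⟨(ihφ T).2 fun w hw => (h w hw).1, (ihψ T).2 fun w hw => (h w hw).2⟩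
  | or φ ψ ihφ ihψ =>
    intro T
    constructor
    · rintro ⟨T₁, T₂, rfl, h1, h2⟩ w hw
      rcases hw with hw | hw
      · exact ⟨{w}, ∅, by simp, (ihφ T₁).1 h1 w hw, ml_empty K ψ⟩
      · exact ⟨∅, {w}, by simp, ml_empty K φ, (ihψ T₂).1 h2 w hw⟩
    · intro h
      refine ⟨{w ∈ T | MLSat K {w} φ}, {w ∈ T | ¬ MLSat K {w} φ}, ?_, ?_, ?_⟩
      · ext u; simp only [Set.mem_union, Set.mem_sep_iff]; tauto
      · exact (ihφ _).2 fun w hw => hw.2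
      · refine (ihψ _).2 fun w hw => ?_
        obtain ⟨T₁, T₂, hT, h1, h2⟩ := h w hw.1
        have hw' : w ∈ T₁ ∪ T₂ := by rw [hT]; rfl
        rcases hw' with hw' | hw'
        · exact absurd ((ihφ T₁).1 h1 w hw') hw.2
        · exact (ihψ T₂).1 h2 w hw'
  | dia φ ih =>
    intro T
    constructor
    · rintro ⟨T', ⟨hs1, hs2⟩, hT'⟩ w hw
      obtain ⟨v, hv, hr⟩ := hs1 w hw
      refine ⟨{v}, ⟨?_, ?_⟩, (ih T').1 hT' v hv⟩
      · rintro u rfl; exact ⟨v, rfl, hr⟩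
      · rintro u rfl; exact ⟨w, rfl, hr⟩
    · intro h
      refine ⟨{v | ∃ w ∈ T, K.R w v ∧ MLSat K {v} φ}, ⟨?_, ?_⟩, ?_⟩
      · intro w hw
        obtain ⟨T', ⟨hs1, hs2⟩, hT'⟩ := h w hw
        obtain ⟨v, hv, hr⟩ := hs1 w rfl
        exact ⟨v, ⟨w, hw, hr, (ih T').1 hT' v hv⟩, hr⟩
      · rintro v ⟨w, hw, hr, _⟩; exact ⟨w, hw, hr⟩
      · refine (ih _).2 fun v hv => ?_
        obtain ⟨w', hw', hr', hsat⟩ := hv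
        exact hsat
  | box φ ih =>
    intro T
    have himg : ∀ v, v ∈ K.img T ↔ ∃ w ∈ T, v ∈ K.img {w} := by
      intro v; simp [Kripke.img]
    constructor
    · intro h w hw
      show MLSat K (K.img {w}) φ
      refine (ih _).2 fun v hv => ?_
      exact (ih _).1 h v ((himg v).2 ⟨w, hw, hv⟩)
    · intro h
      refine (ih _).2 fun v hv => ?_
      obtain ⟨w, hw, hv'⟩ := (himg v).1 hv
      exact (ih _).1 (h w hw) v hv'

lemma ml_sing_or {w : W} {φ ψ : MLForm} :
    MLSat K {w} (.or φ ψ) ↔ MLSat K {w} φ ∨ MLSat K {w} ψ := by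
  constructor
  · rintro ⟨T₁, T₂, hT, h1, h2⟩
    have hw : w ∈ T₁ ∪ T₂ := by rw [hT]; rfl
    rcases hw with hw | hw
    · exact Or.inl ((ml_flat K φ T₁).1 h1 w hw)
    · exact Or.inr ((ml_flat K ψ T₂).1 h2 w hw)
  · rintro (h | h)
    · exact ⟨{w}, ∅, by simp, h, ml_empty K ψ⟩
    · exact ⟨∅, {w}, by simp, ml_empty K φ, h⟩

lemma ml_sing_dia {w : W} {φ : MLForm} :
    MLSat K {w} (.dia φ) ↔ ∃ v, K.R w v ∧ MLSat K {v} φ := by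
  constructor
  · rintro ⟨T', ⟨hs1, hs2⟩, hT'⟩
    obtain ⟨v, hv, hr⟩ := hs1 w rfl
    exact ⟨v, hr, (ml_flat K φ T').1 hT' v hv⟩
  · rintro ⟨v, hr, hv⟩
    exact ⟨{v}, ⟨fun u hu => hu ▸ ⟨v, rfl, hr⟩, fun u hu => ⟨w, rfl, hu ▸ hr⟩⟩, hv⟩

lemma ml_sing_box {w : W} {φ : MLForm} :
    MLSat K {w} (.box φ) ↔ ∀ v, K.R w v → MLSat K {v} φ := by
  have himg : K.img {w} = {v | K.R w v} := by
    ext v; simp [Kripke.img]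
  show MLSat K (K.img {w}) φ ↔ _
  rw [himg, ml_flat K φ]
  simp only [Set.mem_setOf_eq]

lemma ml_neg {w : W} (χ : MLForm) :
    MLSat K {w} χ.nnfNeg ↔ ¬ MLSat K {w} χ := by
  induction χ generalizing w with
  | pos p =>
    show ({w} : Set W) ∩ K.V p = ∅ ↔ ¬ ({w} : Set W) ⊆ K.V p
    simp [Set.eq_empty_iff_forall_notMem, Set.subset_def]
  | neg p =>
    show ({w} : Set W) ⊆ K.V p ↔ ¬ (({w} : Set W) ∩ K.V p = ∅)
    simp [Set.eq_empty_iff_forall_notMem, Set.subset_def]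
  | and φ ψ ihφ ihψ =>
    show MLSat K {w} (.or φ.nnfNeg ψ.nnfNeg) ↔ ¬ (MLSat K {w} φ ∧ MLSat K {w} ψ)
    rw [ml_sing_or, ihφ, ihψ]
    tauto
  | or φ ψ ihφ ihψ =>
    show MLSat K {w} φ.nnfNeg ∧ MLSat K {w} ψ.nnfNeg ↔ ¬ MLSat K {w} (.or φ ψ)
    rw [ml_sing_or, ihφ, ihψ]
    tauto
  | dia φ ih =>
    show MLSat K {w} (.box φ.nnfNeg) ↔ ¬ MLSat K {w} (.dia φ)
    rw [ml_sing_box, ml_sing_dia]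
    push_neg
    constructor
    · intro h v hr hc; exact (ih).1 (h v hr) hc
    · intro h v hr; exact (ih).2 (h v hr)
  | box φ ih =>
    show MLSat K {w} (.dia φ.nnfNeg) ↔ ¬ MLSat K {w} (.box φ)
    rw [ml_sing_box, ml_sing_dia]
    push_neg
    constructor
    · rintro ⟨v, hr, hv⟩; exact ⟨v, hr, (ih).1 hv⟩
    · rintro ⟨v, hr, hv⟩; exact ⟨v, hr, (ih).2 hv⟩

end Aux


section Comb

lemma mem_allBLists {n : ℕ} {l : List Bool} : l ∈ allBLists n ↔ l.length = n := by
  induction n generalizing l with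
  | zero =>
    show l ∈ [[]] ↔ _
    simp [List.length_eq_zero_iff]
  | succ n ih =>
    show l ∈ (allBLists n).flatMap _ ↔ _
    simp only [List.mem_flatMap]
    constructor
    · rintro ⟨a, ha, hl⟩
      have : l = true :: a ∨ l = false :: a := by simpa using hl
      rcases this with rfl | rfl <;> simp [ih.1 ha]
    · intro hl
      cases l with
      | nil => simp at hl
      | cons b t =>
        refine ⟨t, ih.2 (by simpa using hl), ?_⟩
        cases b <;> simp

lemma length_flatMap_pair {α β : Type} (l : List α) (f g : α → β) :
    (l.flatMap fun x => [f x, g x]).length = 2 * l.length := by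
  induction l with
  | nil => rfl
  | cons a t ih =>
    simp only [List.flatMap_cons, List.length_append, ih, List.length_cons]
    simp [Nat.mul_add]
    omega

lemma length_allBLists (n : ℕ) : (allBLists n).length = 2 ^ n := by
  induction n with
  | zero => rfl
  | succ n ih =>
    show ((allBLists n).flatMap fun l => [true :: l, false :: l]).length = _
    rw [length_flatMap_pair, ih, pow_succ]
    ring

lemma nodup_allBLists (n : ℕ) : (allBLists n).Nodup := by
  induction n with
  | zero =>
    show ([[]] : List (List Bool)).Nodup
    simp
  | succ n ih =>
    show ((allBLists n).flatMap fun l => [true :: l, false :: l]).Nodup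
    rw [List.nodup_flatMap]
    refine ⟨fun x _ => by simp, List.Pairwise.imp ?_ ih⟩
    intro a b hne x hx1 hx2
    simp only [List.mem_cons, List.mem_singleton, List.not_mem_nil, or_false] at hx1 hx2
    rcases hx1 with rfl | rfl <;> rcases hx2 with h | h <;> simp_all

lemma mem_zipWith_iff {α β γ : Type} {f : α → β → γ} {l : List α} {g : List β} {c : γ}
    (hc : c ∈ List.zipWith f l g) :
    ∃ i, ∃ (h1 : i < l.length) (h2 : i < g.length), c = f l[i] g[i] := by
  induction l generalizing g with
  | nil => simp at hc
  | cons a t ih =>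
    cases g with
    | nil => simp at hc
    | cons b s =>
      simp only [List.zipWith_cons_cons, List.mem_cons] at hc
      rcases hc with h | h
      · exact ⟨0, by simp, by simp, by simpa using h⟩
      · obtain ⟨i, h1, h2, rfl⟩ := ih h
        exact ⟨i + 1, by simpa using h1, by simpa using h2, by simp⟩

lemma zipWith_map_self {α β γ : Type} (f : α → β → γ) (l : List α) (G : α → β) :
    List.zipWith f l (l.map G) = l.map fun a => f a (G a) := by
  induction l with
  | nil => rfl
  | cons a t ih => simp [ih]

lemma vrank_toMLI (χ : MLForm) : vrank χ.toMLI = 0 := by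
  induction χ <;> simp [MLForm.toMLI, vrank, *]

lemma vrank_foldr_and (L : List MLIForm) (b : MLIForm) (h : ∀ x ∈ L, vrank x = 0) :
    vrank (L.foldr MLIForm.and b) = vrank b := by
  induction L with
  | nil => rfl
  | cons a t ih =>
    show vrank (MLIForm.and a _) = _
    rw [show vrank (MLIForm.and a (t.foldr MLIForm.and b)) =
      vrank a + vrank (t.foldr MLIForm.and b) from rfl]
    rw [h a (by simp), ih fun x hx => h x (by simp [hx])]
    simp

lemma vrank_mlDepConj (φs : List MLForm) (a : List Bool) (ψ : MLForm) :
    vrank (mlDepConj φs a ψ) = 1 := by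
  unfold mlDepConj
  rw [vrank_foldr_and]
  · show vrank ψ.toMLI + vrank ψ.nnfNeg.toMLI + 1 = 1
    simp [vrank_toMLI]
  · intro x hx
    obtain ⟨i, h1, h2, rfl⟩ := mem_zipWith_iff hx
    unfold mlLit
    split <;> simp [vrank_toMLI]

lemma vrank_mlBigOr (L : List MLIForm) (h : ∀ x ∈ L, vrank x = 1) :
    vrank (mlBigOr L) = L.length := by
  induction L with
  | nil => rfl
  | cons a t ih =>
    cases t with
    | nil => simpa [mlBigOr] using h a (by simp)
    | cons b s =>
      show vrank (.or a (mlBigOr (b :: s))) = _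
      rw [show vrank (MLIForm.or a (mlBigOr (b :: s))) =
        vrank a + vrank (mlBigOr (b :: s)) from rfl]
      rw [h a (by simp), ih fun x hx => h x (by simp [hx])]
      simp [Nat.add_comm]

lemma vrankE_dep (φs : List MLForm) (ψ : MLForm) :
    vrankE (.dep φs ψ) = 2 ^ φs.length := by
  show vrank (mlDepTranslation φs ψ) = _
  unfold mlDepTranslation
  rw [vrank_mlBigOr]
  · rw [List.length_map, length_allBLists]
  · intro x hx
    obtain ⟨a, _, rfl⟩ := List.mem_map.1 hx
    exact vrank_mlDepConj φs a ψ

end Comb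


section DNF

variable {W : Type} (K : Kripke W)

/-- The boolean value of an ML-formula at a single world. -/
noncomputable def bVal (w : W) (χ : MLForm) : Bool :=
  @decide (MLSat K {w} χ) (Classical.propDecidable _)

lemma bVal_true_iff {w : W} {χ : MLForm} : bVal K w χ = true ↔ MLSat K {w} χ := by
  simp [bVal]

lemma bVal_false_iff {w : W} {χ : MLForm} : bVal K w χ = false ↔ ¬ MLSat K {w} χ := by
  simp [bVal]

/-- An ML literal: `χ` if `b = true`, `χ^⊥` otherwise. -/
def litF (χ : MLForm) (b : Bool) : MLForm := if b then χ else χ.nnfNeg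

lemma litF_sing {w : W} {χ : MLForm} {b : Bool} :
    MLSat K {w} (litF χ b) ↔ bVal K w χ = b := by
  cases b with
  | true =>
    simp only [litF, if_true]
    exact (bVal_true_iff K).symm
  | false =>
    show MLSat K {w} (if False then χ else χ.nnfNeg) ↔ _
    rw [if_neg (fun h => h), ml_neg]
    exact (bVal_false_iff K).symm

/-- The ML-disjunct `φ₁^{a₁} ∧ … ∧ φₙ^{aₙ} ∧ ψ^b`. -/
def depDisjunct (φs : List MLForm) (ψ : MLForm) (a : List Bool) (b : Bool) : MLForm :=
  (List.zipWith litF φs a).foldr .and (litF ψ b)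

/-- The pattern of truth values of `φs` at the world `w`. -/
noncomputable def patOf (w : W) (φs : List MLForm) : List Bool := φs.map (bVal K w)

lemma patOf_length (w : W) (φs : List MLForm) : (patOf K w φs).length = φs.length := by
  simp [patOf]

lemma patOf_mem (w : W) (φs : List MLForm) : patOf K w φs ∈ allBLists φs.length :=
  mem_allBLists.2 (patOf_length K w φs)

lemma depDisjunct_sing {w : W} {φs : List MLForm} {ψ : MLForm} {a : List Bool} {b : Bool}
    (h : a.length = φs.length) :
    MLSat K {w} (depDisjunct φs ψ a b) ↔ patOf K w φs = a ∧ bVal K w ψ = b := by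
  induction φs generalizing a with
  | nil =>
    cases a with
    | nil =>
      show MLSat K {w} (litF ψ b) ↔ _
      rw [litF_sing]
      simp [patOf]
    | cons c t => simp at h
  | cons χ φs ih =>
    cases a with
    | nil => simp at h
    | cons c t =>
      show MLSat K {w} (.and (litF χ c) ((List.zipWith litF φs t).foldr .and (litF ψ b))) ↔ _
      have ht : t.length = φs.length := by simpa using h
      constructor
      · rintro ⟨h1, h2⟩
        have := (ih ht).1 h2
        refine ⟨?_, this.2⟩
        show bVal K w χ :: patOf K w φs = c :: t
        rw [(litF_sing K).1 h1, this.1]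
      · rintro ⟨h1, h2⟩
        have hc : bVal K w χ = c ∧ patOf K w φs = t := by
          have : bVal K w χ :: patOf K w φs = c :: t := h1
          exact ⟨List.head_eq_of_cons_eq this, List.tail_eq_of_cons_eq this⟩
        exact ⟨(litF_sing K).2 hc.1, (ih ht).2 ⟨hc.2, h2⟩⟩

lemma patOf_eq_iff {w v : W} {φs : List MLForm} :
    patOf K w φs = patOf K v φs ↔ ∀ χ ∈ φs, (MLSat K {w} χ ↔ MLSat K {v} χ) := by
  unfold patOf
  rw [List.map_inj_left]
  refine forall_congr' fun χ => imp_congr_right fun _ => ?_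
  constructor
  · intro h
    rw [← bVal_true_iff (K := K) (w := w), ← bVal_true_iff (K := K) (w := v), h]
  · intro h
    by_cases hs : MLSat K {w} χ
    · rw [(bVal_true_iff K).2 hs, ((bVal_true_iff K).2 (h.1 hs)).symm]
    · rw [(bVal_false_iff K).2 hs, ((bVal_false_iff K).2 fun hc => hs (h.2 hc)).symm]

/-- An always-false ML formula. -/
def falseF : MLForm := .and (.pos 0) (.neg 0)

lemma falseF_sing {w : W} : ¬ MLSat K {w} falseF := by
  rintro ⟨h1, h2⟩
  have hw : w ∈ K.V 0 := h1 rfl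
  have : w ∈ ({w} : Set W) ∩ K.V 0 := ⟨rfl, hw⟩
  rw [h2] at this
  exact this

/-- Big splitting disjunction of a list of ML formulas. -/
def bigOrF (l : List MLForm) : MLForm := l.foldr .or falseF

lemma bigOrF_sing {w : W} {l : List MLForm} :
    MLSat K {w} (bigOrF l) ↔ ∃ β ∈ l, MLSat K {w} β := by
  induction l with
  | nil =>
    show MLSat K {w} falseF ↔ _
    simp [falseF_sing K]
  | cons a t ih =>
    show MLSat K {w} (.or a (bigOrF t)) ↔ _
    rw [ml_sing_or, ih]
    simp

lemma length_flatMap_le {α β : Type} (l : List α) (f : α → List β) (m : ℕ)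
    (h : ∀ a ∈ l, (f a).length ≤ m) : (l.flatMap f).length ≤ l.length * m := by
  induction l with
  | nil => simp
  | cons a t ih =>
    rw [List.flatMap_cons, List.length_append]
    have := ih fun x hx => h x (by simp [hx])
    have ha := h a (by simp)
    simp only [List.length_cons]
    calc (f a).length + (t.flatMap f).length ≤ m + t.length * m := Nat.add_le_add ha this
    _ = (t.length + 1) * m := by ring

/-- The disjunctive normal form lemma: every `EMDL`-formula is, over any fixed
model, equivalent to a pointwise disjunction of at most `2^{vrankE φ}` ML
formulas. -/
lemma emdl_dnf (φ : EMDLForm) :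
    ∃ L : List MLForm, L.length ≤ 2 ^ vrankE φ ∧
      ∀ T : Set W, EMDLSat K T φ ↔ ∃ α ∈ L, ∀ w ∈ T, MLSat K {w} α := by
  induction φ with
  | pos p =>
    refine ⟨[.pos p], by simpa using Nat.one_le_two_pow, fun T => ?_⟩
    show MLSat K T (.pos p) ↔ _
    rw [ml_flat K (.pos p) T]
    simp
  | neg p =>
    refine ⟨[.neg p], by simpa using Nat.one_le_two_pow, fun T => ?_⟩
    show MLSat K T (.neg p) ↔ _
    rw [ml_flat K (.neg p) T]
    simp
  | and φ ψ ihφ ihψ =>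
    obtain ⟨L1, hl1, h1⟩ := ihφ
    obtain ⟨L2, hl2, h2⟩ := ihψ
    refine ⟨L1.flatMap fun α => L2.map fun β => .and α β, ?_, fun T => ?_⟩
    · have : vrankE (.and φ ψ) = vrankE φ + vrankE ψ := rfl
      rw [this, pow_add]
      calc (L1.flatMap fun α => L2.map fun β => MLForm.and α β).length
          ≤ L1.length * L2.length :=
            length_flatMap_le _ _ _ fun a _ => by simp
        _ ≤ 2 ^ vrankE φ * 2 ^ vrankE ψ := Nat.mul_le_mul hl1 hl2
    · show (EMDLSat K T φ ∧ EMDLSat K T ψ) ↔ _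
      rw [h1 T, h2 T]
      constructor
      · rintro ⟨⟨α, hα, hαT⟩, β, hβ, hβT⟩
        refine ⟨.and α β, ?_, fun w hw => ⟨hαT w hw, hβT w hw⟩⟩
        simp only [List.mem_flatMap, List.mem_map]
        exact ⟨α, hα, β, hβ, rfl⟩
      · rintro ⟨γ, hγ, hT⟩
        simp only [List.mem_flatMap, List.mem_map] at hγ
        obtain ⟨α, hα, β, hβ, rfl⟩ := hγ
        exact ⟨⟨α, hα, fun w hw => (hT w hw).1⟩, β, hβ, fun w hw => (hT w hw).2⟩
  | or φ ψ ihφ ihψ =>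
    obtain ⟨L1, hl1, h1⟩ := ihφ
    obtain ⟨L2, hl2, h2⟩ := ihψ
    refine ⟨L1.flatMap fun α => L2.map fun β => .or α β, ?_, fun T => ?_⟩
    · have : vrankE (.or φ ψ) = vrankE φ + vrankE ψ := rfl
      rw [this, pow_add]
      calc (L1.flatMap fun α => L2.map fun β => MLForm.or α β).length
          ≤ L1.length * L2.length :=
            length_flatMap_le _ _ _ fun a _ => by simp
        _ ≤ 2 ^ vrankE φ * 2 ^ vrankE ψ := Nat.mul_le_mul hl1 hl2
    · constructor
      · rintro ⟨T₁, T₂, rfl, hs1, hs2⟩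
        obtain ⟨α, hα, hαT⟩ := (h1 T₁).1 hs1
        obtain ⟨β, hβ, hβT⟩ := (h2 T₂).1 hs2
        refine ⟨.or α β, ?_, fun w hw => ?_⟩
        · simp only [List.mem_flatMap, List.mem_map]
          exact ⟨α, hα, β, hβ, rfl⟩
        · rw [ml_sing_or]
          rcases hw with hw | hw
          · exact Or.inl (hαT w hw)
          · exact Or.inr (hβT w hw)
      · rintro ⟨γ, hγ, hT⟩
        simp only [List.mem_flatMap, List.mem_map] at hγ
        obtain ⟨α, hα, β, hβ, rfl⟩ := hγ
        refine ⟨{w ∈ T | MLSat K {w} α}, {w ∈ T | ¬ MLSat K {w} α}, ?_, ?_, ?_⟩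
        · ext u; simp only [Set.mem_union, Set.mem_sep_iff]; tauto
        · exact (h1 _).2 ⟨α, hα, fun w hw => hw.2⟩
        · refine (h2 _).2 ⟨β, hβ, fun w hw => ?_⟩
          rcases (ml_sing_or K).1 (hT w hw.1) with h | h
          · exact absurd h hw.2
          · exact h
  | dia φ ihφ =>
    obtain ⟨L, hl, h⟩ := ihφ
    refine ⟨L.map .dia, by rw [List.length_map]; exact hl, fun T => ?_⟩
    constructor
    · rintro ⟨T', hstep, hT'⟩
      obtain ⟨α, hα, hαT⟩ := (h T').1 hT'
      refine ⟨.dia α, List.mem_map_of_mem hα, fun w hw => ?_⟩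
      rw [ml_sing_dia]
      obtain ⟨v, hv, hr⟩ := hstep.1 w hw
      exact ⟨v, hr, hαT v hv⟩
    · rintro ⟨γ, hγ, hT⟩
      obtain ⟨α, hα, rfl⟩ := List.mem_map.1 hγ
      refine ⟨{v | ∃ w ∈ T, K.R w v ∧ MLSat K {v} α}, ⟨?_, ?_⟩, ?_⟩
      · intro w hw
        obtain ⟨v, hr, hv⟩ := (ml_sing_dia K).1 (hT w hw)
        exact ⟨v, ⟨w, hw, hr, hv⟩, hr⟩
      · rintro v ⟨w, hw, hr, _⟩
        exact ⟨w, hw, hr⟩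
      · refine (h _).2 ⟨α, hα, fun v hv => ?_⟩
        obtain ⟨w, hw, hr, hsat⟩ := hv
        exact hsat
  | box φ ihφ =>
    obtain ⟨L, hl, h⟩ := ihφ
    refine ⟨L.map .box, by rw [List.length_map]; exact hl, fun T => ?_⟩
    show EMDLSat K (K.img T) φ ↔ _
    rw [h (K.img T)]
    constructor
    · rintro ⟨α, hα, hαT⟩
      refine ⟨.box α, List.mem_map_of_mem hα, fun w hw => ?_⟩
      rw [ml_sing_box]
      intro v hr
      exact hαT v ⟨w, hw, hr⟩
    · rintro ⟨γ, hγ, hT⟩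
      obtain ⟨α, hα, rfl⟩ := List.mem_map.1 hγ
      refine ⟨α, hα, fun v hv => ?_⟩
      obtain ⟨w, hw, hr⟩ := hv
      exact (ml_sing_box K).1 (hT w hw) v hr
  | dep φs ψ =>
    classical
    refine ⟨(allBLists (2 ^ φs.length)).map fun g =>
        bigOrF (List.zipWith (depDisjunct φs ψ) (allBLists φs.length) g), ?_, fun T => ?_⟩
    · rw [List.length_map, length_allBLists, vrankE_dep]
    · constructor
      · intro hdep
        set G : List Bool → Bool := fun a =>
          if ∃ v ∈ T, patOf K v φs = a ∧ MLSat K {v} ψ then true else false with hGdef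
        have hmem : (allBLists φs.length).map G ∈ allBLists (2 ^ φs.length) :=
          mem_allBLists.2 (by rw [List.length_map, length_allBLists])
        refine ⟨_, List.mem_map_of_mem hmem, fun w hw => ?_⟩
        rw [zipWith_map_self, bigOrF_sing]
        refine ⟨depDisjunct φs ψ (patOf K w φs) (G (patOf K w φs)),
          List.mem_map_of_mem (patOf_mem K w φs), ?_⟩
        rw [depDisjunct_sing K (patOf_length K w φs)]
        refine ⟨rfl, ?_⟩
        by_cases hψ : MLSat K {w} ψ
        · rw [(bVal_true_iff K).2 hψ]
          have : G (patOf K w φs) = true := by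
            rw [hGdef]
            simp only [if_pos (⟨w, hw, rfl, hψ⟩ :
              ∃ v ∈ T, patOf K v φs = patOf K w φs ∧ MLSat K {v} ψ)]
          exact this.symm
        · rw [(bVal_false_iff K).2 hψ]
          have : G (patOf K w φs) = false := by
            rw [hGdef]
            refine if_neg ?_
            rintro ⟨v, hv, hpat, hvψ⟩
            exact hψ ((hdep w hw v hv ((patOf_eq_iff K).1 hpat.symm)).2 hvψ)
          exact this.symm
      · rintro ⟨γ, hγ, hT⟩
        obtain ⟨g, hg, rfl⟩ := List.mem_map.1 hγ
        intro w hw v hv hiff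
        obtain ⟨βw, hβw, hsatw⟩ := (bigOrF_sing K).1 (hT w hw)
        obtain ⟨βv, hβv, hsatv⟩ := (bigOrF_sing K).1 (hT v hv)
        obtain ⟨i, hi1, hi2, rfl⟩ := mem_zipWith_iff hβw
        obtain ⟨j, hj1, hj2, rfl⟩ := mem_zipWith_iff hβv
        have hleni : (allBLists φs.length)[i].length = φs.length :=
          mem_allBLists.1 (List.getElem_mem hi1)
        have hlenj : (allBLists φs.length)[j].length = φs.length :=
          mem_allBLists.1 (List.getElem_mem hj1)
        have hwd := (depDisjunct_sing K hleni).1 hsatw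
        have hvd := (depDisjunct_sing K hlenj).1 hsatv
        have hpat : patOf K w φs = patOf K v φs := (patOf_eq_iff K).2 hiff
        have hij : i = j := by
          have : (allBLists φs.length)[i] = (allBLists φs.length)[j] := by
            rw [← hwd.1, ← hvd.1, hpat]
          exact ((nodup_allBLists φs.length).getElem_inj_iff).1 this
        subst hij
        have hbv : bVal K w ψ = bVal K v ψ := by
          rw [hwd.2, hvd.2]
        constructor
        · intro hs
          exact (bVal_true_iff K).1 (hbv ▸ (bVal_true_iff K).2 hs)
        · intro hs
          exact (bVal_true_iff K).1 (hbv ▸ (bVal_true_iff K).2 hs)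

end DNF

/-- Every `EMDL`-formula `φ` is `2^{vrank φ}`-coherent,
where `vrank φ` counts the `⊻`'s of the `ML(⊻)`-translation of `φ`. -/
theorem emdl_coherence {W : Type} [Nonempty W] (K : Kripke W) (T : Set W)
    (φ : EMDLForm) :
    EMDLSat K T φ ↔
      ∀ T' ⊆ T, T'.encard ≤ (2 ^ vrankE φ : ℕ) → EMDLSat K T' φ := by
  classical
  obtain ⟨L, hlen, hchar⟩ := emdl_dnf K φ
  constructor
  · intro hT T' hsub _
    rw [hchar] at hT ⊢
    obtain ⟨α, hα, hαT⟩ := hT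
    exact ⟨α, hα, fun w hw => hαT w (hsub hw)⟩
  · intro h
    rw [hchar]
    by_contra hc
    push_neg at hc
    choose f hfT hfn using hc
    let S : Finset W := (L.attach.map fun a => f a.1 a.2).toFinset
    have hS : (↑S : Set W) ⊆ T := by
      intro w hw
      simp only [S, Finset.mem_coe, List.mem_toFinset, List.mem_map, List.mem_attach,
        true_and] at hw
      obtain ⟨a, ha⟩ := hw
      exact ha ▸ hfT a.1 a.2
    have hcard : (↑S : Set W).encard ≤ ((2 ^ vrankE φ : ℕ) : ℕ∞) := by
      rw [Set.encard_coe_eq_coe_finsetCard]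
      have h1 : S.card ≤ L.length := by
        refine le_trans (List.toFinset_card_le _) ?_
        simp
      exact_mod_cast le_trans h1 hlen
    have hsat := h _ hS hcard
    rw [hchar] at hsat
    obtain ⟨α, hα, hαS⟩ := hsat
    refine hfn α hα (hαS (f α hα) ?_)
    simp only [S, Finset.mem_coe, List.mem_toFinset, List.mem_map]
    exact ⟨⟨α, hα⟩, List.mem_attach _ _, rfl⟩
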